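/- For every horizon m ≥ 0 and every n > 0, the Gaussian one-armed-bandit value function is nondecreasing in the posterior mean: if μ ≤ μ' then V_m(μ,n,γ,τ,λ) ≤ V_m(μ',n,γ,τ,λ). -/
import Mathlib


open MeasureTheory ProbabilityTheory
open scoped NNReal ENNReal

/-- Finite-horizon value function of the Gaussian one-armed bandit:
`V γ τ m μ n λ`, with discount `γ`, observation precision `τ`, horizon `m`,
posterior state `(μ, n)` and safe-arm reward `λ`. The expectation over the
next observation is taken under the Gaussian predictive distribution
`𝒩(μ, 1/n + 1/τ)`. -/
noncomputable def V (γ τ : ℝ) : ℕ → ℝ → ℝ → ℝ → ℝ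
  | 0, μ, _n, lam => max (μ - lam) 0 / (1 - γ)
  | m + 1, μ, n, lam =>
      max (μ - lam + γ * ∫ y, V γ τ m ((n * μ + τ * y) / (n + τ)) (n + τ) lam
        ∂(gaussianReal μ (1 / n + 1 / τ).toNNReal)) 0

namespace NmabAux

open Real

/-- `id` is integrable with respect to a nondegenerate Gaussian. -/
lemma integrable_id_gaussian (μ : ℝ) {v : ℝ≥0} (hv : v ≠ 0) :
    Integrable (fun x : ℝ => x) (gaussianReal μ v) := by
  have hv' : (0 : ℝ) < v := by exact_mod_cast pos_iff_ne_zero.mpr hv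
  rw [gaussianReal_of_var_ne_zero _ hv]
  rw [integrable_withDensity_iff (measurable_gaussianPDF μ v)
    (ae_of_all _ fun x => ENNReal.ofReal_lt_top)]
  have hto : ∀ x : ℝ, ((gaussianPDF μ v x).toReal) = gaussianPDFReal μ v x := fun x =>
    ENNReal.toReal_ofReal (gaussianPDFReal_nonneg _ _ _)
  simp_rw [hto]
  have hb : (0 : ℝ) < (2 * (v : ℝ))⁻¹ := by positivity
  have h1 : Integrable (fun x : ℝ =>
      x * rexp (-(2 * (v : ℝ))⁻¹ * x ^ 2) + μ * rexp (-(2 * (v : ℝ))⁻¹ * x ^ 2)) :=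
    (integrable_mul_exp_neg_mul_sq hb).add ((integrable_exp_neg_mul_sq hb).const_mul μ)
  have h2 := h1.comp_sub_right μ
  have h3 := h2.const_mul ((Real.sqrt (2 * π * (v : ℝ)))⁻¹)
  refine h3.congr (ae_of_all _ fun x => ?_)
  have he : -(2 * (v : ℝ))⁻¹ * (x - μ) ^ 2 = -(x - μ) ^ 2 / (2 * (v : ℝ)) := by
    rw [neg_mul, inv_mul_eq_div, neg_div]
  simp only [gaussianPDFReal, he]
  ring

/-- Translation identity for Gaussian integrals. -/
lemma shift_integral {v : ℝ≥0} {f : ℝ → ℝ} (hf : Measurable f) (a : ℝ) :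
    ∫ y, f y ∂(gaussianReal a v) = ∫ z, f (a + z) ∂(gaussianReal 0 v) := by
  have hmap : (gaussianReal 0 v).map (a + ·) = gaussianReal a v := by
    have := gaussianReal_map_const_add (μ := 0) (v := v) a
    rwa [zero_add] at this
  rw [← hmap, integral_map (measurable_const_add a).aemeasurable hf.aestronglyMeasurable]

lemma V_nonneg {γ τ : ℝ} (hγ1 : γ < 1) :
    ∀ (m : ℕ) (μ n lam : ℝ), 0 ≤ V γ τ m μ n lam := by
  intro m μ n lam
  cases m with
  | zero => exact div_nonneg (le_max_right _ 0) (by linarith)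
  | succ m => exact le_max_right _ 0

/-- Recursive constant used to bound the value function. -/
noncomputable def Dbd (γ τ : ℝ) : ℕ → ℝ → ℝ
  | 0, _ => 0
  | m + 1, n =>
      γ * ((∫ z, |z| ∂(gaussianReal 0 (1 / n + 1 / τ).toNNReal)) / (1 - γ) + Dbd γ τ m (n + τ))

lemma Dbd_nonneg {γ τ : ℝ} (hγ0 : 0 ≤ γ) (hγ1 : γ < 1) :
    ∀ (m : ℕ) (n : ℝ), 0 ≤ Dbd γ τ m n := by
  intro m
  induction m with
  | zero => intro n; simp [Dbd]
  | succ m ih =>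
      intro n
      have h1 : (0:ℝ) ≤ ∫ z, |z| ∂(gaussianReal 0 (1 / n + 1 / τ).toNNReal) :=
        integral_nonneg fun _ => abs_nonneg _
      have h2 := ih (n + τ)
      have h1γ : (0:ℝ) < 1 - γ := by linarith
      simp only [Dbd]
      positivity

end NmabAux

open NmabAux

/-- Joint induction: monotonicity in the mean together with a linear-growth bound. -/
lemma nmab_mono_and_bound (γ τ lam : ℝ)
    (hγ0 : 0 ≤ γ) (hγ1 : γ < 1) (hτ : 0 < τ) :
    ∀ m : ℕ,
      (∀ μ μ' n : ℝ, 0 < n → μ ≤ μ' → V γ τ m μ n lam ≤ V γ τ m μ' n lam) ∧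
      (∀ μ n : ℝ, 0 < n →
        V γ τ m μ n lam ≤ (|μ| + |lam|) / (1 - γ) + Dbd γ τ m n) := by
  have h1γ : (0:ℝ) < 1 - γ := by linarith
  intro m
  induction m with
  | zero =>
      constructor
      · intro μ μ' n hn h
        simp only [V]
        have hm : max (μ - lam) 0 ≤ max (μ' - lam) 0 := max_le_max (by linarith) le_rfl
        exact div_le_div_of_nonneg_right hm h1γ.le |>.trans_eq rfl
      · intro μ n hn
        simp only [V, Dbd, add_zero]
        have habs : μ - lam ≤ |μ| + |lam| := by
          have h1 : μ - lam ≤ |μ - lam| := le_abs_self _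
          have h2 : |μ - lam| ≤ |μ| + |lam| := abs_sub _ _
          linarith
        have hm : max (μ - lam) 0 ≤ |μ| + |lam| := max_le habs (by positivity)
        exact div_le_div_of_nonneg_right hm h1γ.le
  | succ m ih =>
      obtain ⟨ihmono, ihbd⟩ := ih
      -- common facts for a given n > 0
      have hmain : ∀ μ μ' n : ℝ, 0 < n → μ ≤ μ' →
          (μ - lam + γ * ∫ y, V γ τ m ((n * μ + τ * y) / (n + τ)) (n + τ) lam
            ∂(gaussianReal μ (1 / n + 1 / τ).toNNReal)) ≤
          (μ' - lam + γ * ∫ y, V γ τ m ((n * μ' + τ * y) / (n + τ)) (n + τ) lam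
            ∂(gaussianReal μ' (1 / n + 1 / τ).toNNReal)) ∧
          (μ - lam + γ * ∫ y, V γ τ m ((n * μ + τ * y) / (n + τ)) (n + τ) lam
            ∂(gaussianReal μ (1 / n + 1 / τ).toNNReal)) ≤
            (|μ| + |lam|) / (1 - γ) + Dbd γ τ (m + 1) n := by
        intro μ μ' n hn hμ
        have hnτ : (0:ℝ) < n + τ := by linarith
        set v : ℝ≥0 := (1 / n + 1 / τ).toNNReal with hvdef
        have hvpos : (0:ℝ) < 1 / n + 1 / τ := by positivity
        have hv : v ≠ 0 := by
          simp only [hvdef, ne_eq, Real.toNNReal_eq_zero, not_le]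
          exact hvpos
        -- monotonicity of the integrand as a function of the posterior mean argument
        have hargmono : ∀ a : ℝ, Monotone fun y : ℝ =>
            V γ τ m ((n * a + τ * y) / (n + τ)) (n + τ) lam := by
          intro a y y' hy
          apply ihmono _ _ _ hnτ
          rw [div_le_div_iff₀ hnτ hnτ]
          nlinarith [mul_le_mul_of_nonneg_left hy (le_of_lt hτ)]
        -- translation of the integral
        have key : ∀ a : ℝ,
            (∫ y, V γ τ m ((n * a + τ * y) / (n + τ)) (n + τ) lam ∂(gaussianReal a v)) =
            ∫ z, V γ τ m (a + τ * z / (n + τ)) (n + τ) lam ∂(gaussianReal 0 v) := by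
          intro a
          rw [shift_integral ((hargmono a).measurable) a]
          refine integral_congr_ae (ae_of_all _ fun z => ?_)
          congr 1
          field_simp
          ring
        -- monotone shifted integrand
        have hshiftmono : ∀ a : ℝ, Monotone fun z : ℝ =>
            V γ τ m (a + τ * z / (n + τ)) (n + τ) lam := by
          intro a z z' hz
          apply ihmono _ _ _ hnτ
          have : τ * z / (n + τ) ≤ τ * z' / (n + τ) := by
            apply div_le_div_of_nonneg_right _ hnτ.le
            nlinarith
          linarith
        -- |τ z / (n+τ)| ≤ |z|
        have habsz : ∀ z : ℝ, |τ * z / (n + τ)| ≤ |z| := by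
          intro z
          rw [abs_div, abs_mul, abs_of_pos hτ, abs_of_pos hnτ, div_le_iff₀ hnτ]
          nlinarith [abs_nonneg z]
        -- integrability of |z|
        have hz : Integrable (fun z : ℝ => |z|) (gaussianReal 0 v) :=
          (integrable_id_gaussian 0 hv).abs
        -- dominating function and integrability of the shifted integrand
        have hdomint : ∀ a : ℝ, Integrable
            (fun z : ℝ => (|a| + |z| + |lam|) / (1 - γ) + Dbd γ τ m (n + τ))
            (gaussianReal 0 v) :=
          fun a => ((((integrable_const |a|).add hz).add
            (integrable_const |lam|)).div_const (1 - γ)).add (integrable_const _)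
        have hptbd : ∀ a z : ℝ,
            V γ τ m (a + τ * z / (n + τ)) (n + τ) lam ≤
              (|a| + |z| + |lam|) / (1 - γ) + Dbd γ τ m (n + τ) := by
          intro a z
          have h1 := ihbd (a + τ * z / (n + τ)) (n + τ) hnτ
          have h2 : |a + τ * z / (n + τ)| ≤ |a| + |z| :=
            (abs_add_le _ _).trans (by linarith [habsz z])
          have h3 : (|a + τ * z / (n + τ)| + |lam|) / (1 - γ) ≤ (|a| + |z| + |lam|) / (1 - γ) :=
            div_le_div_of_nonneg_right (by linarith) h1γ.le
          linarith
        have hint : ∀ a : ℝ, Integrable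
            (fun z : ℝ => V γ τ m (a + τ * z / (n + τ)) (n + τ) lam) (gaussianReal 0 v) := by
          intro a
          refine (hdomint a).mono' ((hshiftmono a).measurable).aestronglyMeasurable
            (ae_of_all _ fun z => ?_)
          rw [Real.norm_eq_abs, abs_of_nonneg (V_nonneg hγ1 _ _ _ _)]
          exact hptbd a z
        -- compare integrals for μ ≤ μ'
        have hII : (∫ z, V γ τ m (μ + τ * z / (n + τ)) (n + τ) lam ∂(gaussianReal 0 v)) ≤
            ∫ z, V γ τ m (μ' + τ * z / (n + τ)) (n + τ) lam ∂(gaussianReal 0 v) := by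
          refine integral_mono_of_nonneg (ae_of_all _ fun z => V_nonneg hγ1 _ _ _ _)
            (hint μ') (ae_of_all _ fun z => ?_)
          exact ihmono _ _ _ hnτ (by linarith)
        -- bound on the integral for a = μ
        set Kv : ℝ := ∫ z, |z| ∂(gaussianReal 0 v) with hKdef
        have hKnonneg : 0 ≤ Kv := integral_nonneg fun _ => abs_nonneg _
        have hDnn : 0 ≤ Dbd γ τ m (n + τ) := Dbd_nonneg hγ0 hγ1 m (n + τ)
        have hdomval : (∫ z, ((|μ| + |z| + |lam|) / (1 - γ) + Dbd γ τ m (n + τ))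
              ∂(gaussianReal 0 v)) = (|μ| + Kv + |lam|) / (1 - γ) + Dbd γ τ m (n + τ) := by
          have i0 : Integrable (fun z : ℝ => |μ| + |z|) (gaussianReal 0 v) :=
            (integrable_const _).add hz
          have i1 : Integrable (fun z : ℝ => |μ| + |z| + |lam|) (gaussianReal 0 v) :=
            i0.add (integrable_const _)
          have i2 : Integrable (fun z : ℝ => (|μ| + |z| + |lam|) / (1 - γ))
              (gaussianReal 0 v) := i1.div_const _
          rw [integral_add i2 (integrable_const _), integral_div,
            integral_add i0 (integrable_const _), integral_add (integrable_const _) hz]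
          simp [hKdef]
        have hJ : (∫ z, V γ τ m (μ + τ * z / (n + τ)) (n + τ) lam ∂(gaussianReal 0 v)) ≤
            (|μ| + Kv + |lam|) / (1 - γ) + Dbd γ τ m (n + τ) := by
          rw [← hdomval]
          exact integral_mono_of_nonneg (ae_of_all _ fun z => V_nonneg hγ1 _ _ _ _)
            (hdomint μ) (ae_of_all _ fun z => hptbd μ z)
        constructor
        · rw [key μ, key μ']
          have := mul_le_mul_of_nonneg_left hII hγ0
          linarith
        · rw [key μ]
          simp only [Dbd, ← hvdef, ← hKdef]
          have hγJ := mul_le_mul_of_nonneg_left hJ hγ0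
          have habs : μ - lam ≤ |μ| + |lam| := by
            have h1 : μ - lam ≤ |μ - lam| := le_abs_self _
            have h2 : |μ - lam| ≤ |μ| + |lam| := abs_sub _ _
            linarith
          set A : ℝ := |μ| + |lam| with hAdef
          have hA : A = (1 - γ) * (A / (1 - γ)) := by field_simp
          have hsplit : (A + Kv) / (1 - γ) = A / (1 - γ) + Kv / (1 - γ) := add_div _ _ _
          have harr : |μ| + Kv + |lam| = A + Kv := by rw [hAdef]; ring
          rw [harr] at hγJ
          nlinarith [hγJ, habs, hA, hsplit]
      constructor
      · intro μ μ' n hn hμ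
        simp only [V]
        exact max_le_max (hmain μ μ' n hn hμ).1 le_rfl
      · intro μ n hn
        simp only [V]
        have h2 := (hmain μ μ n hn le_rfl).2
        refine max_le h2 ?_
        have := Dbd_nonneg (τ := τ) hγ0 hγ1 (m + 1) n
        positivity

/-- For every horizon `m` and `n > 0`, the Gaussian one-armed-bandit value
is nondecreasing in the posterior mean. -/
theorem nmab_value_monotone_in_mu (γ τ lam : ℝ)
    (hγ0 : 0 ≤ γ) (hγ1 : γ < 1) (hτ : 0 < τ) :
    ∀ m : ℕ, ∀ μ μ' n : ℝ, 0 < n → μ ≤ μ' →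
      V γ τ m μ n lam ≤ V γ τ m μ' n lam := by
  intro m
  exact (nmab_mono_and_bound γ τ lam hγ0 hγ1 hτ m).1
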